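/- In the setting of the one-factor long-only minimum variance problem with active set K, the quantity C_K = Σ_{j∈K} β_j/δ_j² is nonzero. -/

import Mathlib

open Matrix

set_option maxHeartbeats 1000000 in
theorem stmt8 {p : ℕ} (β δ : Fin p → ℝ) (σ : ℝ)
    (hδ : ∀ i, 0 < δ i) (hσ : 0 < σ)
    (hsum : (∑ j, β j / (δ j) ^ 2) ≠ 0)
    (S : Matrix (Fin p) (Fin p) ℝ)
    (hSdef : S = σ ^ 2 • (Matrix.of fun i j => β i * β j)
      + Matrix.diagonal (fun i => (δ i) ^ 2))
    (w : Fin p → ℝ) (hwsum : ∑ i, w i = 1) (hnn : ∀ i, 0 ≤ w i)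
    (hmin : ∀ v : Fin p → ℝ, (∑ i, v i = 1) → (∀ i, 0 ≤ v i) →
      w ⬝ᵥ S *ᵥ w ≤ v ⬝ᵥ S *ᵥ v) :
    (∑ j ∈ Finset.univ.filter (fun i => 0 < w i), β j / (δ j) ^ 2) ≠ 0 := by
  -- quadratic form formula
  have hV : ∀ v : Fin p → ℝ,
      v ⬝ᵥ S *ᵥ v = σ^2 * (∑ j, β j * v j)^2 + ∑ j, (δ j)^2 * (v j)^2 := by
    intro v
    subst hSdef
    simp only [dotProduct, mulVec, Matrix.add_apply, Matrix.smul_apply, Matrix.of_apply,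
      smul_eq_mul, Matrix.diagonal_apply, add_mul, ite_mul, zero_mul,
      Finset.sum_add_distrib, Finset.sum_ite_eq, Finset.mem_univ, if_true, mul_add]
    congr 1
    · rw [sq (∑ j, β j * v j), Finset.sum_mul_sum, Finset.mul_sum]
      refine Finset.sum_congr rfl fun i _ => ?_
      rw [Finset.mul_sum, Finset.mul_sum]
      refine Finset.sum_congr rfl fun j _ => ?_
      ring
    · refine Finset.sum_congr rfl fun i _ => ?_
      ring
  set m : ℝ := ∑ k, β k * w k with hm
  -- first-order conditions
  have hfoc : ∀ i j : Fin p, 0 < w i →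
      σ^2 * m * β i + (δ i)^2 * w i ≤ σ^2 * m * β j + (δ j)^2 * w j := by
    intro i j hi
    rcases eq_or_ne i j with rfl | hij
    · exact le_refl _
    by_contra hlt
    push_neg at hlt
    set B : ℝ := (σ^2 * m * β j + (δ j)^2 * w j) - (σ^2 * m * β i + (δ i)^2 * w i) with hB
    have hBneg : B < 0 := by simp only [hB]; linarith
    set Q : ℝ := σ^2 * (β j - β i)^2 + (δ j)^2 + (δ i)^2 with hQdef
    have hQ : 0 < Q := by
      have := hδ i; have := hδ j; positivity
    set t : ℝ := min (w i) (-B / Q) with ht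
    have ht0 : 0 < t := lt_min hi (div_pos (by linarith) hQ)
    have htwi : t ≤ w i := min_le_left _ _
    have htQ : t * Q ≤ -B := by
      have h1 : t ≤ -B / Q := min_le_right _ _
      calc t * Q ≤ (-B / Q) * Q := by
            exact mul_le_mul_of_nonneg_right h1 hQ.le
        _ = -B := by field_simp
    set v : Fin p → ℝ := fun k =>
      w k + t * ((if k = j then (1:ℝ) else 0) - (if k = i then (1:ℝ) else 0)) with hv
    have hvsum : ∑ k, v k = 1 := by
      simp only [hv, mul_sub, Finset.sum_add_distrib, Finset.sum_sub_distrib,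
        ← Finset.mul_sum, Finset.sum_ite_eq', Finset.mem_univ, if_true, hwsum]
      ring
    have hvnn : ∀ k, 0 ≤ v k := by
      intro k
      simp only [hv]
      rcases eq_or_ne k i with rfl | hki
      · simp [hij, Ne.symm hij] at *
        linarith
      · rcases eq_or_ne k j with rfl | hkj
        · simp [hki]
          have := hnn k; linarith
        · simp [hki, hkj]
          exact hnn k
    have hle := hmin v hvsum hvnn
    rw [hV w, hV v] at hle
    -- compute β·v
    have h1 : (∑ k, β k * v k) = m + t * (β j - β i) := by
      simp only [hv, mul_add, mul_sub, mul_ite, mul_one, mul_zero,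
        Finset.sum_add_distrib, Finset.sum_sub_distrib, ← Finset.mul_sum,
        Finset.sum_ite_eq', Finset.mem_univ, if_true, hm]
      ring
    -- compute ∑ δ² v²
    have h2 : (∑ k, (δ k)^2 * (v k)^2)
        = (∑ k, (δ k)^2 * (w k)^2) + 2 * t * ((δ j)^2 * w j - (δ i)^2 * w i)
          + t^2 * ((δ j)^2 + (δ i)^2) := by
      have hpt : ∀ k, (δ k)^2 * (v k)^2
          = (δ k)^2 * (w k)^2
            + 2 * t * ((if k = j then (δ k)^2 * w k else 0) - (if k = i then (δ k)^2 * w k else 0))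
            + t^2 * ((if k = j then (δ k)^2 else 0) + (if k = i then (δ k)^2 else 0)) := by
        intro k
        simp only [hv]
        rcases eq_or_ne k i with rfl | hki
        · simp [hij]
          all_goals ring
        · rcases eq_or_ne k j with rfl | hkj
          · simp [hki]
            all_goals ring
          · simp [hki, hkj]
      rw [Finset.sum_congr rfl fun k _ => hpt k]
      simp only [Finset.sum_add_distrib, Finset.sum_sub_distrib, ← Finset.mul_sum,
        Finset.sum_ite_eq', Finset.mem_univ, if_true]
    rw [h1, h2] at hle
    have hexp : 0 ≤ 2 * t * B + t^2 * Q := by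
      simp only [hB, hQdef]
      nlinarith [hle]
    nlinarith [mul_pos ht0 hQ, mul_pos ht0 (neg_pos.2 hBneg)]
  -- main argument
  intro hC
  -- K is nonempty
  have hex : ∃ i₀, 0 < w i₀ := by
    by_contra h
    push_neg at h
    have : ∑ i, w i = 0 := Finset.sum_eq_zero fun i _ => le_antisymm (h i) (hnn i)
    rw [hwsum] at this; norm_num at this
  obtain ⟨i₀, hi₀⟩ := hex
  by_cases hKu : ∀ j, 0 < w j
  · have : Finset.univ.filter (fun i => 0 < w i) = Finset.univ := by
      apply Finset.filter_true_of_mem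
      intro i _; exact hKu i
    rw [this] at hC
    exact hsum hC
  · push_neg at hKu
    obtain ⟨j₀, hj₀⟩ := hKu
    have hwj₀ : w j₀ = 0 := le_antisymm hj₀ (hnn j₀)
    set K := Finset.univ.filter (fun i => 0 < w i) with hK
    set lam : ℝ := σ^2 * m * β i₀ + (δ i₀)^2 * w i₀ with hlamdef
    have hlam : ∀ i, 0 < w i → σ^2 * m * β i + (δ i)^2 * w i = lam :=
      fun i hi => le_antisymm (hfoc i i₀ hi) (hfoc i₀ i hi₀)
    -- m = 0
    have hm0 : m = 0 := by
      have hmK : m = ∑ i ∈ K, β i * w i := by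
        rw [hm]
        refine (Finset.sum_filter_of_ne ?_).symm
        intro x _ hx
        rcases (hnn x).lt_or_eq with h | h
        · exact h
        · exfalso; apply hx; rw [← h]; ring
      have hterm : ∀ i ∈ K, β i * w i
          = lam * (β i / (δ i)^2) - σ^2 * m * ((β i)^2 / (δ i)^2) := by
        intro i hiK
        have hi : 0 < w i := by
          simpa [hK] using hiK
        have heq := hlam i hi
        have hδi : (δ i)^2 ≠ 0 := pow_ne_zero 2 (ne_of_gt (hδ i))
        rw [mul_div_assoc', mul_div_assoc', div_sub_div_same, eq_div_iff hδi]
        linear_combination β i * heq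
      have hQnn : 0 ≤ ∑ i ∈ K, (β i)^2 / (δ i)^2 := by
        apply Finset.sum_nonneg
        intro i _; positivity
      have hsub : (∑ i ∈ K, β i * w i) = lam * (∑ i ∈ K, β i / (δ i)^2)
          - σ^2 * m * (∑ i ∈ K, (β i)^2 / (δ i)^2) := by
        rw [Finset.sum_congr rfl hterm, Finset.sum_sub_distrib,
          ← Finset.mul_sum, ← Finset.mul_sum]
      have hme := hmK.trans hsub
      rw [hC] at hme
      have h2 : m * (1 + σ^2 * (∑ i ∈ K, (β i)^2 / (δ i)^2)) = 0 := by
        linear_combination hme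
      rcases mul_eq_zero.1 h2 with h | h
      · exact h
      · exfalso; nlinarith [mul_nonneg (sq_nonneg σ) hQnn]
    have h1 : lam ≤ σ^2 * m * β j₀ + (δ j₀)^2 * w j₀ := hfoc i₀ j₀ hi₀
    rw [hm0, hwj₀] at h1
    simp at h1
    have hpos : 0 < lam := by
      rw [hlamdef, hm0]
      have := mul_pos (pow_pos (hδ i₀) 2) hi₀
      nlinarith
    linarith
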